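/- Let α > 0, 0 < c < 1, and let w ≥ 0 be a real number with c·(e^{(1−c)w} − 1) < 1 − c. Define P_n(c) = Σ_{k=0}^n S(n,k)·(α)_k·c^k·(1−c)^{n−k}. Then Σ_{n=0}^∞ P_n(c)·w^n/n! = ((1 − c·e^{(1−c)w})/(1−c))^{−α}, where the power is the real power. -/

import Mathlib

/-- The Pochhammer symbol (rising factorial) `(a)_k = a (a+1) ⋯ (a+k-1)`. -/
def poch (a : ℝ) (k : ℕ) : ℝ := ∏ i ∈ Finset.range k, (a + i)

/-- The Stirling numbers of the second kind,
`S(n,k) = (1/k!) Σ_{j=0}^k C(k,j) (-1)^{k-j} j^n`. -/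
noncomputable def stirling2 (n k : ℕ) : ℝ :=
  (1 / k.factorial) *
    ∑ j ∈ Finset.range (k + 1), (k.choose j : ℝ) * (-1 : ℝ) ^ (k - j) * (j : ℝ) ^ n


open Finset

noncomputable def T (k n : ℕ) : ℝ :=
  ∑ j ∈ range (k + 1), (k.choose j : ℝ) * (-1 : ℝ) ^ (k - j) * (j : ℝ) ^ n

lemma stirling2_eq_T (n k : ℕ) : stirling2 n k = (1 / k.factorial) * T k n := rfl


lemma T_zero (k : ℕ) : T k 0 = if k = 0 then 1 else 0 := by
  have h := add_pow (1 : ℝ) (-1) k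
  rw [show ((1:ℝ) + -1) = 0 by ring] at h
  have h2 : T k 0 = ∑ m ∈ range (k+1), (1:ℝ)^m * (-1)^(k-m) * (k.choose m : ℝ) := by
    simp only [T, pow_zero, mul_one]
    exact Finset.sum_congr rfl fun j hj => by ring
  rw [h2, ← h]
  rcases Nat.eq_zero_or_pos k with hk | hk
  · subst hk; simp
  · rw [if_neg hk.ne', zero_pow hk.ne']

lemma T_zero_left (n : ℕ) : T 0 (n + 1) = 0 := by simp [T]

lemma T_rec (k n : ℕ) : T (k+1) (n+1) = (k+1) * (T (k+1) n + T k n) := by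
  have h1 : T (k+1) (n+1) = (k+1) * ∑ i ∈ range (k+1),
      (k.choose i : ℝ) * (-1:ℝ)^(k-i) * ((i:ℝ)+1)^n := by
    rw [T, Finset.sum_range_succ' _ (k+1), Finset.mul_sum]
    have h0 : (((k+1).choose 0 : ℕ) : ℝ) * (-1:ℝ)^(k+1-0) * ((0:ℕ):ℝ)^(n+1) = 0 := by simp
    rw [h0, add_zero]
    refine Finset.sum_congr rfl fun i hi => ?_
    have hc : ((k+1) : ℕ) * k.choose i = (k+1).choose (i+1) * (i+1) := Nat.add_one_mul_choose_eq k i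
    have hc' : ((k+1 : ℕ) : ℝ) * (k.choose i : ℝ) = ((k+1).choose (i+1) : ℝ) * ((i:ℝ)+1) := by
      exact_mod_cast congrArg (Nat.cast : ℕ → ℝ) hc
    have hsub : (k + 1) - (i + 1) = k - i := Nat.succ_sub_succ k i
    rw [hsub]
    push_cast at hc' ⊢
    linear_combination (-((-1:ℝ)^(k-i) * (((i:ℝ)+1)^n))) * hc'
  have hB : ∑ i ∈ range (k+1), (k.choose (i+1) : ℝ) * (-1:ℝ)^(k-i) * ((i:ℝ)+1)^n
      = -(T k n) + (-1:ℝ)^k * (0:ℝ)^n := by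
    have hTk : T k n = (∑ i ∈ range k, (k.choose (i+1) : ℝ) * (-1:ℝ)^(k-(i+1)) * ((i:ℝ)+1)^n)
        + (-1:ℝ)^k * (0:ℝ)^n := by
      rw [T, Finset.sum_range_succ' _ k]
      congr 1
      · exact Finset.sum_congr rfl fun i hi => by push_cast; ring
      · simp
    rw [Finset.sum_range_succ, Nat.choose_succ_self]
    simp only [Nat.cast_zero, zero_mul, add_zero]
    have hstep : ∀ i ∈ range k, (k.choose (i+1) : ℝ) * (-1:ℝ)^(k-i) * ((i:ℝ)+1)^n
        = -((k.choose (i+1) : ℝ) * (-1:ℝ)^(k-(i+1)) * ((i:ℝ)+1)^n) := by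
      intro i hi
      have hik : i < k := Finset.mem_range.mp hi
      have : k - i = (k - (i+1)) + 1 := by omega
      rw [this, pow_succ]
      ring
    rw [Finset.sum_congr rfl hstep, Finset.sum_neg_distrib, hTk]
    ring
  have h2 : ∑ i ∈ range (k+1), (k.choose i : ℝ) * (-1:ℝ)^(k-i) * ((i:ℝ)+1)^n
      = T (k+1) n + T k n := by
    have hL : T (k+1) n = (∑ i ∈ range (k+1),
        ((k+1).choose (i+1) : ℝ) * (-1:ℝ)^(k-i) * ((i:ℝ)+1)^n) + (-1:ℝ)^(k+1) * (0:ℝ)^n := by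
      rw [T, Finset.sum_range_succ' _ (k+1)]
      congr 1
      · refine Finset.sum_congr rfl fun i hi => ?_
        rw [Nat.succ_sub_succ]
        push_cast; ring
      · simp
    have hsplit : ∀ i ∈ range (k+1), ((k+1).choose (i+1) : ℝ) * (-1:ℝ)^(k-i) * ((i:ℝ)+1)^n
        = (k.choose i : ℝ) * (-1:ℝ)^(k-i) * ((i:ℝ)+1)^n
          + (k.choose (i+1) : ℝ) * (-1:ℝ)^(k-i) * ((i:ℝ)+1)^n := by
      intro i hi
      rw [Nat.choose_succ_succ]
      push_cast; ring
    rw [Finset.sum_congr rfl hsplit, Finset.sum_add_distrib, hB] at hL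
    have hsgn : (-1:ℝ)^(k+1) = -((-1:ℝ)^k) := by rw [pow_succ]; ring
    rw [hsgn] at hL
    linarith [hL]
  rw [h1, h2]

lemma T_nonneg (k n : ℕ) : 0 ≤ T k n := by
  induction n generalizing k with
  | zero => rw [T_zero]; split <;> norm_num
  | succ n ih =>
    cases k with
    | zero => rw [T_zero_left]
    | succ k =>
      rw [T_rec]
      have := ih (k+1); have := ih k
      positivity

lemma T_eq_zero_of_lt {n k : ℕ} (h : n < k) : T k n = 0 := by
  induction n generalizing k with
  | zero => rw [T_zero, if_neg (by omega)]
  | succ n ih =>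
    cases k with
    | zero => omega
    | succ k =>
      rw [T_rec, ih (by omega), ih (by omega)]
      ring

lemma poch_pos {a : ℝ} (ha : 0 < a) (k : ℕ) : 0 < poch a k :=
  Finset.prod_pos fun i _ => by positivity

lemma poch_succ (a : ℝ) (k : ℕ) : poch a (k+1) = poch a k * (a + k) :=
  Finset.prod_range_succ _ k

section Binomial
variable {α : ℝ} (hα : 0 < α)

noncomputable def acoef (α : ℝ) (k : ℕ) : ℝ := poch α k / k.factorial

lemma acoef_pos (hα : 0 < α) (k : ℕ) : 0 < acoef α k := by
  have := poch_pos hα k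
  have : (0:ℝ) < k.factorial := by positivity
  unfold acoef
  positivity

lemma acoef_succ (α : ℝ) (k : ℕ) : acoef α (k+1) * (k+1) = acoef α k * (α + k) := by
  unfold acoef
  rw [poch_succ, Nat.factorial_succ]
  have h1 : ((k+1).factorial : ℝ) ≠ 0 := by positivity
  have h2 : ((k:ℝ)+1) ≠ 0 := by positivity
  field_simp [Nat.factorial_succ]
  push_cast; ring

/-- summability of `acoef α k * k * r^(k-1)`-type series for `0 < r < 1`. -/
lemma summable_acoef_mul (hα : 0 < α) {r : ℝ} (hr0 : 0 < r) (hr1 : r < 1) :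
    Summable (fun k : ℕ => acoef α k * k * r ^ (k-1)) := by
  obtain ⟨r', hrr', hr'1⟩ : ∃ r', r < r' ∧ r' < 1 := ⟨(r+1)/2, by linarith, by linarith⟩
  apply summable_of_ratio_norm_eventually_le hr'1
  have hev : ∀ᶠ k : ℕ in Filter.atTop, (α + k) * r ≤ r' * k := by
    rw [Filter.eventually_atTop]
    obtain ⟨K, hK⟩ := exists_nat_gt (α * r / (r' - r))
    refine ⟨K + 1, fun k hk => ?_⟩
    have hkK : (α * r) / (r' - r) < k := lt_of_lt_of_le hK (by exact_mod_cast by omega)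
    have h1 : α * r < (r' - r) * k := by
      rw [div_lt_iff₀ (by linarith)] at hkK; linarith
    nlinarith
  filter_upwards [hev, Filter.eventually_ge_atTop 1] with k hk hk1
  have hpos : 0 ≤ acoef α k * k * r ^ (k-1) := by
    have := (acoef_pos hα k).le
    positivity
  have hpos' : 0 ≤ acoef α (k+1) * (k+1) * r ^ k := by
    have := (acoef_pos hα (k+1)).le
    positivity
  rw [Real.norm_of_nonneg hpos, Real.norm_of_nonneg ?_]
  swap
  · simpa using hpos'
  have hk' : (k+1) - 1 = k := rfl
  rw [hk']
  have hrk : r ^ k = r ^ (k-1) * r := by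
    conv_lhs => rw [show k = (k-1) + 1 by omega]
    rw [pow_succ]
  have key : acoef α (k+1) * (↑(k+1)) * r ^ k = acoef α k * ((α + k) * r) * r^(k-1) := by
    push_cast
    rw [hrk]
    linear_combination (r^(k-1) * r) * acoef_succ α k
  push_cast at key ⊢
  rw [key]
  have ha := (acoef_pos hα k).le
  have h2 : acoef α k * ((α + k) * r) ≤ acoef α k * (r' * k) :=
    mul_le_mul_of_nonneg_left hk ha
  have h3 : (0:ℝ) ≤ r ^ (k-1) := by positivity
  nlinarith [mul_le_mul_of_nonneg_right h2 h3]

/-- summability of the binomial series for `|x| ≤ r < 1`. -/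
lemma summable_acoef_pow (hα : 0 < α) {r x : ℝ} (hr0 : 0 < r) (hr1 : r < 1)
    (hx : |x| ≤ r) : Summable (fun k : ℕ => acoef α k * x ^ k) := by
  obtain ⟨r', hrr', hr'1⟩ : ∃ r', r < r' ∧ r' < 1 := ⟨(r+1)/2, by linarith, by linarith⟩
  apply summable_of_ratio_norm_eventually_le hr'1
  have hev : ∀ᶠ k : ℕ in Filter.atTop, (α + k) * r ≤ r' * (k+1) := by
    rw [Filter.eventually_atTop]
    obtain ⟨K, hK⟩ := exists_nat_gt (α * r / (r' - r))
    refine ⟨K + 1, fun k hk => ?_⟩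
    have hkK : (α * r) / (r' - r) < k := lt_of_lt_of_le hK (by exact_mod_cast by omega)
    have h1 : α * r < (r' - r) * k := by
      rw [div_lt_iff₀ (by linarith)] at hkK; linarith
    nlinarith
  filter_upwards [hev] with k hk
  have ha := (acoef_pos hα k).le
  have ha' := (acoef_pos hα (k+1)).le
  rw [norm_mul, norm_mul, Real.norm_of_nonneg ha, Real.norm_of_nonneg ha',
    norm_pow, norm_pow]
  have hxk : ‖x‖ ^ (k+1) = ‖x‖^k * ‖x‖ := pow_succ _ _
  rw [hxk]
  have hxr : ‖x‖ ≤ r := by rwa [Real.norm_eq_abs]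
  have hx0 : (0:ℝ) ≤ ‖x‖ := norm_nonneg x
  have hrec : acoef α (k+1) = acoef α k * (α + k) / (k+1) := by
    have h := acoef_succ α k
    field_simp at h ⊢
    linarith [h]
  rw [hrec]
  rw [div_mul_eq_mul_div, div_le_iff₀ (show (0:ℝ) < (k:ℝ)+1 by positivity)]
  have h1 : acoef α k * (α + k) * ‖x‖ ≤ acoef α k * (α + k) * r :=
    mul_le_mul_of_nonneg_left hxr (by positivity)
  have h2 : acoef α k * ((α+k) * r) ≤ acoef α k * (r' * (k+1)) :=
    mul_le_mul_of_nonneg_left hk ha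
  have h3 : (0:ℝ) ≤ ‖x‖^k := by positivity
  nlinarith [mul_le_mul_of_nonneg_right h1 h3, mul_le_mul_of_nonneg_right h2 h3]
end Binomial

lemma acoef_zero (α : ℝ) : acoef α 0 = 1 := by simp [acoef, poch]

lemma binomial_hasSum {α : ℝ} (hα : 0 < α) {u : ℝ} (hu0 : 0 ≤ u) (hu1 : u < 1) :
    HasSum (fun k : ℕ => acoef α k * u ^ k) ((1 - u) ^ (-α)) := by
  set r : ℝ := (u + 1) / 2 with hrdef
  have hr0 : 0 < r := by rw [hrdef]; linarith
  have hr1 : r < 1 := by rw [hrdef]; linarith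
  have hur : u < r := by rw [hrdef]; linarith
  set t : Set ℝ := Set.Ioo (-r) r with htdef
  have h0t : (0:ℝ) ∈ t := by constructor <;> [linarith; linarith]
  have hut : u ∈ t := by constructor <;> [linarith; linarith]
  set F : ℝ → ℝ := fun x => ∑' k : ℕ, acoef α k * x ^ k with hFdef
  set D : ℝ → ℝ := fun x => ∑' k : ℕ, acoef α k * ((k : ℝ) * x ^ (k-1)) with hDdef
  have habs : ∀ x ∈ t, |x| ≤ r := by
    intro x hx
    rw [abs_le]
    exact ⟨le_of_lt hx.1, le_of_lt hx.2⟩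
  -- bound on derivatives
  have hbound : ∀ (k : ℕ), ∀ x ∈ t, ‖acoef α k * ((k:ℝ) * x ^ (k-1))‖ ≤ acoef α k * k * r^(k-1) := by
    intro k x hx
    rw [norm_mul, norm_mul, Real.norm_of_nonneg (acoef_pos hα k).le,
      Real.norm_of_nonneg (by positivity : (0:ℝ) ≤ (k:ℝ)), Real.norm_eq_abs, abs_pow]
    have h1 : |x| ^ (k-1) ≤ r ^ (k-1) := pow_le_pow_left₀ (abs_nonneg x) (habs x hx) _
    have := (acoef_pos hα k).le
    have hk0 : (0:ℝ) ≤ (k:ℝ) := by positivity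
    calc acoef α k * ((k:ℝ) * |x|^(k-1)) ≤ acoef α k * ((k:ℝ) * r^(k-1)) := by
          apply mul_le_mul_of_nonneg_left (mul_le_mul_of_nonneg_left h1 hk0) this
      _ = acoef α k * k * r^(k-1) := by ring
  have hgderiv : ∀ (k : ℕ) (y : ℝ), HasDerivAt (fun x : ℝ => acoef α k * x ^ k)
      (acoef α k * ((k:ℝ) * y ^ (k-1))) y := fun k y => (hasDerivAt_pow k y).const_mul _
  have hsum0 : Summable fun k : ℕ => acoef α k * (0:ℝ) ^ k :=
    summable_acoef_pow hα hr0 hr1 (by simp [hr0.le])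
  -- derivative of F
  have hderiv : ∀ x ∈ t, HasDerivAt F (D x) x := by
    intro x hx
    exact hasDerivAt_tsum_of_isPreconnected (summable_acoef_mul hα hr0 hr1) isOpen_Ioo
      (convex_Ioo _ _).isPreconnected (fun k y hy => hgderiv k y)
      (fun k y hy => hbound k y hy) h0t hsum0 hx
  have hFsum : ∀ x ∈ t, HasSum (fun k : ℕ => acoef α k * x ^ k) (F x) := fun x hx =>
    (summable_acoef_pow hα hr0 hr1 (habs x hx)).hasSum
  have hDsum : ∀ x ∈ t, HasSum (fun k : ℕ => acoef α k * ((k:ℝ) * x ^ (k-1))) (D x) := by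
    intro x hx
    exact (Summable.of_norm_bounded (summable_acoef_mul hα hr0 hr1)
      (fun k => hbound k x hx)).hasSum
  -- the ODE identity
  have hODE : ∀ x ∈ t, (1 - x) * D x = α * F x := by
    intro x hx
    have hb := hDsum x hx
    have hb' : HasSum (fun k : ℕ => acoef α (k+1) * (((k:ℝ)+1) * x ^ k)) (D x) := by
      have h := (hasSum_nat_add_iff (f := fun k : ℕ => acoef α k * ((k:ℝ) * x ^ (k-1))) 1).mpr
        (by simpa using hb)
      simpa using h
    have hterm : ∀ k : ℕ, acoef α (k+1) * (((k:ℝ)+1) * x ^ k)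
        = α * (acoef α k * x ^ k) + x * (acoef α k * ((k:ℝ) * x ^ (k-1))) := by
      intro k
      have h := acoef_succ α k
      cases k with
      | zero =>
        push_cast at h ⊢
        norm_num
        linear_combination h
      | succ m =>
        have hsub : (m+1) - 1 = m := rfl
        rw [hsub]
        push_cast at h ⊢
        linear_combination (x^(m+1)) * h
    have hsum2 : HasSum (fun k : ℕ => α * (acoef α k * x ^ k) + x * (acoef α k * ((k:ℝ) * x ^ (k-1))))
        (α * F x + x * D x) := ((hFsum x hx).mul_left α).add (hb.mul_left x)
    have heq : (fun k : ℕ => acoef α (k+1) * (((k:ℝ)+1) * x ^ k))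
        = fun k : ℕ => α * (acoef α k * x ^ k) + x * (acoef α k * ((k:ℝ) * x ^ (k-1))) :=
      funext hterm
    rw [heq] at hb'
    have := hb'.unique hsum2
    linarith [this]
  -- G is constant
  set G : ℝ → ℝ := fun x => F x * (1-x) ^ α with hGdef
  have hGd : ∀ x ∈ t, HasDerivAt G 0 x := by
    intro x hx
    have h1x : 0 < 1 - x := by have := hx.2; simp only [htdef, Set.mem_Ioo] at hx; linarith
    have hrpow : HasDerivAt (fun y : ℝ => (1-y)^α) (α * (1-x)^(α-1) * -1) x := by
      have houter : HasDerivAt (fun z : ℝ => z ^ α) (α * (1-x)^(α-1)) (1-x) :=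
        Real.hasDerivAt_rpow_const (Or.inl h1x.ne')
      have hinner : HasDerivAt (fun y : ℝ => 1 - y) (-1) x := by
        simpa using (hasDerivAt_id x).const_sub 1
      exact houter.comp x hinner
    have hG := (hderiv x hx).mul hrpow
    have hval : D x * (1-x)^α + F x * (α * (1-x)^(α-1) * -1) = 0 := by
      have hpow : (1-x)^α = (1-x)^(α-1) * (1-x) := by
        rw [← Real.rpow_add_one h1x.ne' (α-1), sub_add_cancel]
      rw [hpow]
      linear_combination ((1-x)^(α-1)) * hODE x hx
    rw [hval] at hG
    exact hG
  have hsub : Set.Icc (0:ℝ) u ⊆ t := by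
    intro x hx
    constructor
    · linarith [hx.1]
    · linarith [hx.2]
  have hcont : ContinuousOn G (Set.Icc 0 u) := fun x hx =>
    ((hGd x (hsub hx)).continuousAt).continuousWithinAt
  have hconst : G u = G 0 :=
    constant_of_has_deriv_right_zero hcont
      (fun x hx => ((hGd x (hsub (Set.mem_Icc_of_Ico hx))).hasDerivWithinAt)) u
      ⟨hu0, le_refl u⟩
  have hF0 : F 0 = 1 := by
    rw [hFdef]
    simp only
    rw [tsum_eq_single 0 (fun k hk => by simp [zero_pow hk])]
    simp [acoef_zero]
  have hG0 : G 0 = 1 := by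
    rw [hGdef]; simp only
    rw [hF0, sub_zero, Real.one_rpow, mul_one]
  have hG0u : F u * (1-u)^α = 1 := by
    have := hconst; rw [hG0] at this; exact this
  have hne : (0:ℝ) < (1-u)^α := Real.rpow_pos_of_pos (by linarith) α
  have hFu : F u = (1-u) ^ (-α) := by
    rw [Real.rpow_neg (by linarith : (0:ℝ) ≤ 1-u)]
    field_simp at hG0u ⊢
    linarith [hG0u]
  have := hFsum u hut
  rwa [hFu] at this





lemma stirling_egf (k : ℕ) (y : ℝ) :
    HasSum (fun n : ℕ => stirling2 n k * y ^ n / n.factorial)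
      ((Real.exp y - 1) ^ k / k.factorial) := by
  have hexp : ∀ j : ℕ, HasSum (fun n : ℕ => ((j:ℝ) * y) ^ n / n.factorial)
      (Real.exp ((j:ℝ) * y)) := by
    intro j
    rw [Real.exp_eq_exp_ℝ]
    exact NormedSpace.expSeries_div_hasSum_exp _
  have hj : ∀ j ∈ range (k+1), HasSum
      (fun n : ℕ => (1 / k.factorial : ℝ) * ((k.choose j : ℝ) * (-1:ℝ)^(k-j)) * (((j:ℝ)*y)^n / n.factorial))
      ((1 / k.factorial : ℝ) * ((k.choose j : ℝ) * (-1:ℝ)^(k-j)) * Real.exp ((j:ℝ)*y)) :=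
    fun j _ => (hexp j).mul_left _
  have hsum := hasSum_sum (fun j hj' => hj j hj')
  have hterm : ∀ n : ℕ, ∑ j ∈ range (k+1),
      (1 / k.factorial : ℝ) * ((k.choose j : ℝ) * (-1:ℝ)^(k-j)) * (((j:ℝ)*y)^n / n.factorial)
      = stirling2 n k * y ^ n / n.factorial := by
    intro n
    rw [stirling2, Finset.mul_sum, Finset.sum_mul, Finset.sum_div]
    refine Finset.sum_congr rfl fun j _ => ?_
    rw [mul_pow]
    ring
  have hval : ∑ j ∈ range (k+1),
      (1 / k.factorial : ℝ) * ((k.choose j : ℝ) * (-1:ℝ)^(k-j)) * Real.exp ((j:ℝ)*y)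
      = (Real.exp y - 1) ^ k / k.factorial := by
    have hpow := add_pow (Real.exp y) (-1 : ℝ) k
    rw [show Real.exp y + -1 = Real.exp y - 1 by ring] at hpow
    rw [hpow, Finset.sum_div]
    refine Finset.sum_congr rfl fun j _ => ?_
    rw [Real.exp_nat_mul, ← Real.exp_nat_mul]
    rw [Real.exp_nat_mul y j]
    ring
  rw [hval] at hsum
  exact funext hterm ▸ hsum

lemma stirling2_nonneg (n k : ℕ) : 0 ≤ stirling2 n k := by
  rw [stirling2_eq_T]
  have := T_nonneg k n
  positivity

/-- The exponential generating function of the Meixner polynomials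
`P_n(c) = Σ_{k=0}^n S(n,k) (α)_k c^k (1-c)^{n-k}`:
`Σ_n P_n(c) w^n/n! = ((1 - c e^{(1-c)w})/(1-c))^{-α}`. -/
theorem meixner_polynomials_egf
    (α c w : ℝ) (hα : 0 < α) (hc : 0 < c) (hc1 : c < 1) (hw : 0 ≤ w)
    (hcw : c * (Real.exp ((1 - c) * w) - 1) < 1 - c)
    (P : ℕ → ℝ → ℝ)
    (hP : ∀ (n : ℕ) (t : ℝ), P n t =
      ∑ k ∈ Finset.range (n + 1), stirling2 n k * poch α k * t ^ k * (1 - t) ^ (n - k)) :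
    HasSum (fun n : ℕ => P n c * w ^ n / n.factorial)
      (((1 - c * Real.exp ((1 - c) * w)) / (1 - c)) ^ (-α)) := by
  have h1c : 0 < 1 - c := by linarith
  set y : ℝ := (1 - c) * w with hydef
  have hy0 : 0 ≤ y := by positivity
  have he1 : 1 ≤ Real.exp y := Real.one_le_exp hy0
  set q : ℝ := c / (1 - c) with hqdef
  have hq0 : 0 ≤ q := by positivity
  set u : ℝ := q * (Real.exp y - 1) with hudef
  have hu0 : 0 ≤ u := by
    apply mul_nonneg hq0; linarith
  have hu1 : u < 1 := by
    rw [hudef, hqdef, div_mul_eq_mul_div, div_lt_one h1c]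
    exact hcw
  set g : ℕ × ℕ → ℝ := fun p => stirling2 p.2 p.1 * poch α p.1 * q ^ p.1 *
    (y ^ p.2 / p.2.factorial) with hgdef
  have hgnn : ∀ p : ℕ × ℕ, 0 ≤ g p := by
    intro p
    have h1 := stirling2_nonneg p.2 p.1
    have h2 := (poch_pos hα p.1).le
    have h3 : (0:ℝ) ≤ y ^ p.2 := by positivity
    have h4 : (0:ℝ) < p.2.factorial := by positivity
    simp only [hgdef]
    positivity
  -- column sums
  have hcol : ∀ k : ℕ, HasSum (fun n => g (k, n)) (acoef α k * u ^ k) := by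
    intro k
    have h := (stirling_egf k y).mul_left (poch α k * q ^ k)
    have heq : (fun n => (poch α k * q ^ k) * (stirling2 n k * y ^ n / n.factorial))
        = fun n => g (k, n) := by
      funext n; simp only [hgdef]; ring
    rw [heq] at h
    have hval : (poch α k * q ^ k) * ((Real.exp y - 1) ^ k / k.factorial)
        = acoef α k * u ^ k := by
      rw [hudef, mul_pow, acoef]
      ring
    rwa [hval] at h
  -- summability of the double family
  have hsummable : Summable g := by
    refine (summable_prod_of_nonneg hgnn).mpr ⟨fun k => (hcol k).summable, ?_⟩
    exact ((binomial_hasSum hα hu0 hu1).summable).congr fun k => ((hcol k).tsum_eq).symm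
  have hgsum : HasSum g (∑' p, g p) := hsummable.hasSum
  have hcolsum : HasSum (fun k => acoef α k * u ^ k) (∑' p, g p) :=
    hgsum.prod_fiberwise hcol
  have hSval : (∑' p, g p) = (1 - u) ^ (-α) :=
    (hcolsum.unique (binomial_hasSum hα hu0 hu1))
  -- swap coordinates
  have hswap : HasSum (fun p : ℕ × ℕ => g (p.2, p.1)) (∑' p, g p) := by
    have := ((Equiv.prodComm ℕ ℕ).hasSum_iff (f := g) (a := ∑' p, g p)).mpr hgsum
    exact this
  -- row sums
  have hrow : ∀ n : ℕ, HasSum (fun k => g (k, n)) (P n c * w ^ n / n.factorial) := by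
    intro n
    have hz : ∀ k ∉ range (n + 1), g (k, n) = 0 := by
      intro k hk
      have hnk : n < k := by simpa using Nat.lt_of_succ_le (not_lt.mp (fun h => hk (mem_range.mpr h)))
      simp only [hgdef, stirling2_eq_T, T_eq_zero_of_lt hnk]
      ring
    have h := hasSum_sum_of_ne_finset_zero (L := SummationFilter.unconditional ℕ) hz
    have hval : ∑ k ∈ range (n + 1), g (k, n) = P n c * w ^ n / n.factorial := by
      rw [hP, Finset.sum_mul, Finset.sum_div]
      refine Finset.sum_congr rfl fun k hk => ?_
      have hkn : k ≤ n := Nat.lt_succ_iff.mp (mem_range.mp hk)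
      simp only [hgdef, hqdef, hydef]
      rw [div_pow, mul_pow, pow_sub₀ (1 - c) h1c.ne' hkn]
      field_simp
    rwa [hval] at h
  have hfinal : HasSum (fun n => P n c * w ^ n / n.factorial) (∑' p, g p) :=
    hswap.prod_fiberwise hrow
  rw [hSval] at hfinal
  have huval : 1 - u = (1 - c * Real.exp ((1 - c) * w)) / (1 - c) := by
    rw [hudef, hqdef, hydef]
    field_simp
    ring
  rwa [huval] at hfinal
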